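/- Let G be a connected simple graph on a finite vertex set V, let p : V → ℝ satisfy ∑_{v ∈ V} p v = 0, and let θ : V → ℝ satisfy G.lapMatrix ℝ *ᵥ θ = p. Let {c,d} be a bridge of G and let S = { v ∈ V : v is reachable from c in the graph obtained from G by deleting the edge {c,d} }. Then θ c − θ d = ∑_{v ∈ S} p v; that is, the DC power flow on a bridge from c to d equals the total net power injection of the side of the bridge containing c. -/

import Mathlib

open Matrix

theorem bridge_flow_eq_sum_injections {V : Type*} [Fintype V] [DecidableEq V]
    (G : SimpleGraph V) [DecidableRel G.Adj] (hG : G.Connected)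
    (p : V → ℝ) (hp : ∑ v, p v = 0)
    (θ : V → ℝ) (hθ : G.lapMatrix ℝ *ᵥ θ = p)
    (c d : V) (hbr : G.IsBridge s(c, d)) :
    θ c - θ d =
      ∑ v ∈ ({v | (G.deleteEdges {s(c, d)}).Reachable c v}).toFinite.toFinset, p v := by
  classical
  have hnr := (SimpleGraph.isBridge_iff).1 hbr
  have hAdj : G.Adj c d := hbr.reachable_iff_adj.1 (hG.preconnected c d)
  set S : Finset V := ({v | (G.deleteEdges {s(c, d)}).Reachable c v}).toFinite.toFinset
    with hSdef
  have hmem : ∀ v, v ∈ S ↔ (G.deleteEdges {s(c, d)}).Reachable c v := by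
    intro v; simp [hSdef]
  have hcS : c ∈ S := (hmem c).2 (SimpleGraph.Reachable.refl c)
  have hdS : d ∉ S := fun h => hnr ((hmem d).1 h)
  set f : V → V → ℝ := fun v u => if G.Adj v u then θ v - θ u else 0 with hf
  have hanti : ∀ v u, f v u = -(f u v) := by
    intro v u
    by_cases h : G.Adj v u
    · simp [hf, h, h.symm]
    · have h' : ¬ G.Adj u v := fun h2 => h h2.symm
      simp [hf, h, h']
  -- express p v as a sum over all u
  have hpv : ∀ v, p v = ∑ u, f v u := by
    intro v
    have : ∑ u, f v u = ∑ u ∈ Finset.univ.filter (G.Adj v), (θ v - θ u) := by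
      rw [Finset.sum_filter]
    rw [← hθ, SimpleGraph.lapMatrix_mulVec_apply, this, Finset.sum_sub_distrib,
      Finset.sum_const]
    have hdeg : (Finset.univ.filter (G.Adj v)).card = G.degree v := by
      rw [← SimpleGraph.neighborFinset_eq_filter, SimpleGraph.card_neighborFinset_eq_degree]
    rw [hdeg, nsmul_eq_mul, SimpleGraph.neighborFinset_eq_filter]
  have key : ∑ v ∈ S, p v = ∑ v ∈ S, ∑ u, f v u := by
    exact Finset.sum_congr rfl fun v _ => hpv v
  have hsplit : ∀ v, ∑ u, f v u = ∑ u ∈ S, f v u + ∑ u ∈ Sᶜ, f v u :=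
    fun v => (Finset.sum_add_sum_compl S _).symm
  have hzero : ∑ v ∈ S, ∑ u ∈ S, f v u = 0 := by
    have h1 : ∑ v ∈ S, ∑ u ∈ S, f v u = ∑ u ∈ S, ∑ v ∈ S, f v u := Finset.sum_comm
    have h2 : ∑ u ∈ S, ∑ v ∈ S, f v u = -∑ v ∈ S, ∑ u ∈ S, f v u := by
      rw [← Finset.sum_neg_distrib]
      refine Finset.sum_congr rfl fun u _ => ?_
      rw [← Finset.sum_neg_distrib]
      exact Finset.sum_congr rfl fun v _ => (hanti v u).symm ▸ rfl
    linarith [h1, h2]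
  have hcross : ∑ v ∈ S, ∑ u ∈ Sᶜ, f v u = θ c - θ d := by
    rw [← Finset.sum_product']
    rw [Finset.sum_eq_single (c, d)]
    · simp [hf, hAdj]
    · rintro ⟨v, u⟩ hvu hne
      simp only [Finset.mem_product, Finset.mem_compl] at hvu
      obtain ⟨hvS, huS⟩ := hvu
      by_cases h : G.Adj v u
      · exfalso
        by_cases he : s(v, u) = s(c, d)
        · rw [Sym2.eq_iff] at he
          rcases he with ⟨rfl, rfl⟩ | ⟨rfl, rfl⟩
          · exact hne rfl
          · exact huS hcS
        · have hadj' : (G.deleteEdges {s(c, d)}).Adj v u := by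
            rw [SimpleGraph.deleteEdges_adj]
            exact ⟨h, by simpa using he⟩
          exact huS ((hmem u).2 (((hmem v).1 hvS).trans hadj'.reachable))
      · simp [hf, h]
    · intro habs
      exact absurd (Finset.mem_product.2 ⟨hcS, Finset.mem_compl.2 hdS⟩) habs
  calc θ c - θ d = ∑ v ∈ S, ∑ u ∈ S, f v u + ∑ v ∈ S, ∑ u ∈ Sᶜ, f v u := by
        rw [hzero, hcross, zero_add]
    _ = ∑ v ∈ S, p v := by
        rw [← Finset.sum_add_distrib, key]
        exact Finset.sum_congr rfl fun v _ => (hsplit v).symm
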